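/- Let α be a positive integer and let n be an integer with 1 ≤ n ≤ α. Then H_α - H_{α-n} = ((-1)^{n+1} / C(α,n)) · Σ_{k=0}^{n-1} (-1)^k·C(α,k)/(n-k), where C(·,·) denotes the binomial coefficient. -/

import Mathlib

/-- Harmonic number `H_n = 1 + 1/2 + ⋯ + 1/n`, `H_0 = 0`. -/
noncomputable def H (n : ℕ) : ℝ := ∑ k ∈ Finset.range n, (1 : ℝ) / (k + 1)

noncomputable def S (a n : ℕ) : ℝ :=
  ∑ k ∈ Finset.range n, (-1 : ℝ) ^ k * (a.choose k : ℝ) / ((n : ℝ) - k)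

lemma H_succ (m : ℕ) : H (m + 1) = H m + 1 / (m + 1) := by
  simp [H, Finset.sum_range_succ]

lemma U (m : ℕ) :
    ∑ j ∈ Finset.range m, (-1 : ℝ) ^ j * (m.choose (j + 1) : ℝ) / (j + 1) = H m := by
  induction m with
  | zero => simp [H]
  | succ m ih =>
    have hsplit : ∀ j : ℕ, ((m + 1).choose (j + 1) : ℝ) =
        (m.choose j : ℝ) + (m.choose (j + 1) : ℝ) := by
      intro j
      rw [Nat.choose_succ_succ]
      push_cast
      ring
    have h1 : ∑ j ∈ Finset.range (m + 1), (-1 : ℝ) ^ j * ((m+1).choose (j + 1) : ℝ) / (j + 1)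
        = (∑ j ∈ Finset.range (m + 1), (-1 : ℝ) ^ j * (m.choose j : ℝ) / (j + 1))
        + ∑ j ∈ Finset.range (m + 1), (-1 : ℝ) ^ j * (m.choose (j + 1) : ℝ) / (j + 1) := by
      rw [← Finset.sum_add_distrib]
      refine Finset.sum_congr rfl fun j _ => ?_
      rw [hsplit j]; ring
    have hB : ∑ j ∈ Finset.range (m + 1), (-1 : ℝ) ^ j * (m.choose (j + 1) : ℝ) / (j + 1)
        = H m := by
      rw [Finset.sum_range_succ, Nat.choose_succ_self]
      simp [ih]
    have hA : ∑ j ∈ Finset.range (m + 1), (-1 : ℝ) ^ j * (m.choose j : ℝ) / (j + 1)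
        = 1 / (m + 1) := by
      have hmul : ∀ j : ℕ, (-1 : ℝ) ^ j * (m.choose j : ℝ) / (j + 1)
          = ((-1 : ℝ) ^ j * ((m+1).choose (j+1) : ℝ)) / (m + 1) := by
        intro j
        have h := Nat.add_one_mul_choose_eq m j
        have h' : ((m : ℝ) + 1) * (m.choose j : ℝ) = ((m+1).choose (j+1) : ℝ) * ((j : ℝ) + 1) := by
          exact_mod_cast congrArg (Nat.cast : ℕ → ℝ) h
        have hj : ((j : ℝ) + 1) ≠ 0 := by positivity
        have hm : ((m : ℝ) + 1) ≠ 0 := by positivity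
        rw [div_eq_div_iff hj hm]
        linear_combination ((-1 : ℝ) ^ j) * h'
      rw [Finset.sum_congr rfl fun j _ => hmul j, ← Finset.sum_div]
      have halt : ∑ j ∈ Finset.range (m + 1), (-1 : ℝ) ^ j * ((m+1).choose (j+1) : ℝ) = 1 := by
        have h0 : ∑ i ∈ Finset.range (m + 2), (-1 : ℤ) ^ i * ((m+1).choose i : ℤ) = 0 :=
          Int.alternating_sum_range_choose_of_ne (Nat.succ_ne_zero m)
        have h0' : ∑ i ∈ Finset.range (m + 2), (-1 : ℝ) ^ i * ((m+1).choose i : ℝ) = 0 := by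
          exact_mod_cast congrArg (Int.cast : ℤ → ℝ) h0
        rw [Finset.sum_range_succ'] at h0'
        have hterm : (-1 : ℝ) ^ 0 * (((m+1).choose 0 : ℕ) : ℝ) = 1 := by simp
        rw [hterm] at h0'
        calc ∑ j ∈ Finset.range (m + 1), (-1 : ℝ) ^ j * ((m+1).choose (j+1) : ℝ)
            = ∑ j ∈ Finset.range (m + 1), -((-1 : ℝ) ^ (j+1) * ((m+1).choose (j+1) : ℝ)) :=
              Finset.sum_congr rfl fun j _ => by ring
          _ = -∑ j ∈ Finset.range (m + 1), (-1 : ℝ) ^ (j+1) * ((m+1).choose (j+1) : ℝ) :=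
              Finset.sum_neg_distrib _
          _ = 1 := by linarith [h0']
      rw [halt]
    rw [h1, hA, hB, H_succ]
    push_cast
    ring

lemma diag (m : ℕ) : S m m = (-1 : ℝ) ^ (m + 1) * H m := by
  rw [S, ← Finset.sum_range_reflect]
  rw [← U m]
  rw [Finset.mul_sum]
  refine Finset.sum_congr rfl fun k hk => ?_
  have hk' : k < m := Finset.mem_range.mp hk
  have hch : m.choose (m - 1 - k) = m.choose (k + 1) := by
    rw [← Nat.choose_symm (by omega : k + 1 ≤ m)]
    congr 1
    omega
  have hcast : (m : ℝ) - ((m - 1 - k : ℕ) : ℝ) = (k : ℝ) + 1 := by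
    have h : (m - 1 - k : ℕ) = m - (k + 1) := by omega
    rw [h, Nat.cast_sub (by omega)]
    push_cast
    ring
  have hsign : (-1 : ℝ) ^ (m - 1 - k) = (-1 : ℝ) ^ (m + 1) * (-1 : ℝ) ^ k := by
    have h : (m - 1 - k) + (k + 1) = m := by omega
    have h2 : (-1 : ℝ) ^ (k+1) * (-1 : ℝ) ^ (k+1) = 1 := by
      rw [← pow_add]
      exact Even.neg_one_pow ⟨k + 1, by ring⟩
    calc (-1 : ℝ) ^ (m - 1 - k) = (-1 : ℝ) ^ (m - 1 - k) * ((-1:ℝ)^(k+1) * (-1:ℝ)^(k+1)) := by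
          rw [h2]; ring
      _ = (-1:ℝ)^m * (-1:ℝ)^(k+1) := by rw [← mul_assoc, ← pow_add, h]
      _ = (-1:ℝ)^(m+1) * (-1:ℝ)^k := by rw [pow_succ, pow_succ]; ring
  rw [hch, hcast, hsign]
  ring

lemma S_succ (a n : ℕ) (hn : 1 ≤ n) : S (a + 1) n = S a n - S a (n - 1) := by
  have key : S (a + 1) n - S a n = - S a (n - 1) := by
    have h1 : S (a + 1) n - S a n
        = ∑ k ∈ Finset.range n, (-1 : ℝ) ^ k * (((a+1).choose k : ℝ) - (a.choose k : ℝ)) / ((n : ℝ) - k) := by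
      rw [S, S, ← Finset.sum_sub_distrib]
      refine Finset.sum_congr rfl fun k _ => ?_
      ring
    obtain ⟨m, rfl⟩ : ∃ m, n = m + 1 := ⟨n - 1, by omega⟩
    rw [h1, Finset.sum_range_succ']
    simp only [Nat.choose_zero_right, Nat.cast_one, sub_self, zero_div, mul_zero, add_zero]
    have hstep : ∀ k : ℕ, (-1 : ℝ) ^ (k+1) * (((a+1).choose (k+1) : ℝ) - (a.choose (k+1) : ℝ)) / (((m+1 : ℕ) : ℝ) - ((k+1 : ℕ) : ℝ))
        = -((-1 : ℝ) ^ k * (a.choose k : ℝ) / ((m : ℝ) - k)) := by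
      intro k
      have hc : ((a+1).choose (k+1) : ℝ) - (a.choose (k+1) : ℝ) = (a.choose k : ℝ) := by
        rw [Nat.choose_succ_succ]
        push_cast
        ring
      rw [hc]
      push_cast
      ring
    rw [Finset.sum_congr rfl fun k _ => hstep k]
    rw [S]
    simp only [Nat.add_sub_cancel]
    exact Finset.sum_neg_distrib _
  linarith

lemma key_lemma : ∀ a n : ℕ, n ≤ a →
    S a n = (-1 : ℝ) ^ (n + 1) * (a.choose n : ℝ) * (H a - H (a - n)) := by
  intro a
  induction a with
  | zero =>
    intro n hn
    interval_cases n
    simp [S]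
  | succ a ih =>
    intro n hn
    rcases Nat.eq_zero_or_pos n with rfl | hn1
    · simp [S]
    rcases Nat.lt_or_ge n (a + 1) with hna | hna
    · -- n ≤ a
      have hna' : n ≤ a := by omega
      rw [S_succ a n hn1, ih n hna', ih (n - 1) (by omega)]
      obtain ⟨m, rfl⟩ : ∃ m, n = m + 1 := ⟨n - 1, by omega⟩
      simp only [Nat.add_sub_cancel]
      have hsub1 : a + 1 - (m + 1) = a - m := by omega
      have hsub2 : a - (m + 1) + 1 = a - m := by omega
      have ha1 : ((a : ℝ) + 1) ≠ 0 := by positivity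
      have ham : ((a : ℝ) - m) ≠ 0 := by
        have : (m : ℝ) < a := by exact_mod_cast (by omega : m < a)
        linarith
      have hH1 : H (a + 1) = H a + 1 / ((a : ℝ) + 1) := H_succ a
      have hH2 : H (a - m) = H (a - (m+1)) + 1 / ((a : ℝ) - m) := by
        rw [← hsub2, H_succ]
        have hc : ((a - (m+1) : ℕ) : ℝ) = (a : ℝ) - m - 1 := by
          rw [Nat.cast_sub (by omega)]
          push_cast
          ring
        rw [hc]
        ring_nf
      have hpascal : ((a+1).choose (m+1) : ℝ) = (a.choose m : ℝ) + (a.choose (m+1) : ℝ) := by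
        rw [Nat.choose_succ_succ]
        push_cast
        ring
      have hmul : (a.choose (m+1) : ℝ) * ((a + 1 : ℕ) : ℝ) = ((a+1).choose (m+1) : ℝ) * ((a + 1 - (m+1) : ℕ) : ℝ) := by
        exact_mod_cast congrArg (Nat.cast : ℕ → ℝ) (Nat.choose_mul_succ_eq a (m+1))
      have hcast1 : ((a + 1 - (m+1) : ℕ) : ℝ) = (a : ℝ) - m := by
        rw [hsub1, Nat.cast_sub (by omega)]
      rw [hcast1] at hmul
      push_cast at hmul
      have hmul2 : (((a+1).choose (m+1) : ℕ) : ℝ) / ((a : ℝ) + 1)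
          = ((a.choose (m+1) : ℕ) : ℝ) / ((a : ℝ) - m) := by
        rw [div_eq_div_iff ha1 ham]
        linarith [hmul]
      rw [hsub1, hH1, hH2]
      linear_combination
        (-((-1:ℝ)^m) * (H a - H (a - (m+1))) + ((-1:ℝ)^m) / ((a:ℝ) - m)) * hpascal
        + (-((-1:ℝ)^m)) * hmul2
    · -- n = a + 1
      have heq : n = a + 1 := by omega
      subst heq
      rw [diag]
      have hH0 : H 0 = 0 := by simp [H]
      simp [Nat.choose_self, Nat.sub_self, hH0]

theorem harmonic_diff_eq_sum (a n : ℕ) (ha : 0 < a) (h1 : 1 ≤ n) (h2 : n ≤ a) :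
    H a - H (a - n) = ((-1 : ℝ) ^ (n + 1) / (a.choose n : ℝ)) *
      ∑ k ∈ Finset.range n, (-1 : ℝ) ^ k * (a.choose k : ℝ) / ((n : ℝ) - k) := by
  have h := key_lemma a n h2
  rw [S] at h
  rw [h]
  have hC : (a.choose n : ℝ) ≠ 0 := Nat.cast_ne_zero.mpr (Nat.choose_pos h2).ne'
  have hs : (-1:ℝ)^(n+1) * (-1:ℝ)^(n+1) = 1 := by
    rw [← pow_add]; exact Even.neg_one_pow ⟨n+1, by ring⟩
  rw [div_mul_eq_mul_div, eq_div_iff hC]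
  linear_combination (-(a.choose n : ℝ) * (H a - H (a - n))) * hs
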